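/- arXiv:2404.06061 — 2 statements merged into one kernel-verified Lean document; each statement's English description precedes it below -/
import Mathlib

section
/- Let S be an invertible n×n real matrix of the form S = C(I - M) with C invertible, let P = ∑_{i=0}^{m} M^i C^{-1}, let E = I - S·P (the exact truncation error), and let E' be any n×n matrix such that both I - E and I - E' are invertible. Define S_app^{-1} = P(I - E')^{-1}. Then S^{-1} - S_app^{-1} = S^{-1}(E - E')(I - E')^{-1}. -/
theorem approx_inverse_error_identity {n : ℕ}
    (C M E' : Matrix (Fin n) (Fin n) ℝ) (hC : IsUnit C)
    (hS : IsUnit (C * (1 - M))) (m : ℕ)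
    (P : Matrix (Fin n) (Fin n) ℝ)
    (hP : P = ∑ i ∈ Finset.range (m + 1), M ^ i * C⁻¹)
    (E : Matrix (Fin n) (Fin n) ℝ)
    (hE : E = 1 - (C * (1 - M)) * P)
    (h1 : IsUnit ((1 : Matrix (Fin n) (Fin n) ℝ) - E))
    (h2 : IsUnit ((1 : Matrix (Fin n) (Fin n) ℝ) - E')) :
    (C * (1 - M))⁻¹ - P * (1 - E')⁻¹ =
      (C * (1 - M))⁻¹ * (E - E') * (1 - E')⁻¹ := by
  set S := C * (1 - M) with hSdef
  have hSinv : S⁻¹ * S = 1 :=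
    Matrix.nonsing_inv_mul S (Matrix.isUnit_iff_isUnit_det S |>.mp hS)
  have hE'inv : (1 - E') * (1 - E')⁻¹ = 1 :=
    Matrix.mul_nonsing_inv _ (Matrix.isUnit_iff_isUnit_det _ |>.mp h2)
  have hP' : P = S⁻¹ * (1 - E) := by
    have : S * P = 1 - E := by rw [hE]; abel
    rw [← this, ← Matrix.mul_assoc, hSinv, Matrix.one_mul]
  rw [hP']
  have : S⁻¹ = S⁻¹ * ((1 - E') * (1 - E')⁻¹) := by rw [hE'inv, Matrix.mul_one]
  nth_rewrite 1 [this]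
  noncomm_ring
end

section
/- Under the hypotheses of the previous identity (S invertible with S^{-1} = P(I-E)^{-1}, and S_app^{-1} = P(I-E')^{-1} with I-E' invertible), for any submultiplicative matrix norm ‖·‖ we have ‖S^{-1} - S_app^{-1}‖ ≤ ‖S^{-1}‖ · ‖E - E'‖ · ‖(I - E')^{-1}‖. -/
theorem approx_inverse_error_bound {n : ℕ}
    (C M E' : Matrix (Fin n) (Fin n) ℝ) (hC : IsUnit C)
    (hS : IsUnit (C * (1 - M))) (m : ℕ)
    (P : Matrix (Fin n) (Fin n) ℝ)
    (hP : P = ∑ i ∈ Finset.range (m + 1), M ^ i * C⁻¹)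
    (E : Matrix (Fin n) (Fin n) ℝ)
    (hE : E = 1 - (C * (1 - M)) * P)
    (h1 : IsUnit ((1 : Matrix (Fin n) (Fin n) ℝ) - E))
    (h2 : IsUnit ((1 : Matrix (Fin n) (Fin n) ℝ) - E'))
    (N : Matrix (Fin n) (Fin n) ℝ → ℝ)
    (hnonneg : ∀ X, 0 ≤ N X)
    (hadd : ∀ X Y, N (X + Y) ≤ N X + N Y)
    (hneg : ∀ X, N (-X) = N X)
    (hsub : ∀ X Y, N (X * Y) ≤ N X * N Y) :
    N ((C * (1 - M))⁻¹ - P * (1 - E')⁻¹) ≤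
      N ((C * (1 - M))⁻¹) * N (E - E') * N ((1 - E')⁻¹) := by
  set S := C * (1 - M) with hSdef
  have hSdet : IsUnit S.det := (Matrix.isUnit_iff_isUnit_det S).mp hS
  have h2det : IsUnit ((1 : Matrix (Fin n) (Fin n) ℝ) - E').det :=
    (Matrix.isUnit_iff_isUnit_det _).mp h2
  have hPS : P = S⁻¹ * (1 - E) := by
    have : S * P = 1 - E := by rw [hE]; noncomm_ring
    calc P = (S⁻¹ * S) * P := by rw [Matrix.nonsing_inv_mul S hSdet, one_mul]
    _ = S⁻¹ * (S * P) := by rw [Matrix.mul_assoc]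
    _ = S⁻¹ * (1 - E) := by rw [this]
  have key : S⁻¹ - P * (1 - E')⁻¹ = S⁻¹ * (E - E') * (1 - E')⁻¹ := by
    have hinv : (1 - E') * (1 - E')⁻¹ = 1 := Matrix.mul_nonsing_inv _ h2det
    calc S⁻¹ - P * (1 - E')⁻¹
        = S⁻¹ * ((1 - E') * (1 - E')⁻¹) - S⁻¹ * (1 - E) * (1 - E')⁻¹ := by
          rw [hinv, mul_one, hPS]
      _ = S⁻¹ * (E - E') * (1 - E')⁻¹ := by noncomm_ring
  rw [key]
  calc N (S⁻¹ * (E - E') * (1 - E')⁻¹)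
      ≤ N (S⁻¹ * (E - E')) * N ((1 - E')⁻¹) := hsub _ _
    _ ≤ N S⁻¹ * N (E - E') * N ((1 - E')⁻¹) :=
        mul_le_mul_of_nonneg_right (hsub _ _) (hnonneg _)
end
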